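/- For every initial condition x₀ in the nonnegative orthant ℝ₊^{P(F)}, there exists a unique function x : [0,∞) → ℝ^{P(F)} with x(0) = x₀ and x'(t) = v(x(t)) for all t ≥ 0 (i.e., the fluid ODE ẋ = v(x) has a unique solution defined for all nonnegative times), and this solution takes values in the nonnegative orthant ℝ₊^{P(F)} for all t ≥ 0. -/

import Mathlib

set_option maxHeartbeats 1000000
set_option linter.unusedSectionVars false
set_option linter.unusedVariables false

open Finset

/-- The fluid vector field `v` of the BitTorrent model, with components indexed by
subsets `A ⊆ F` (the full file `F` being `Finset.univ` of the chunk type `ι`). -/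
noncomputable def vfield {ι : Type*} [Fintype ι] [DecidableEq ι]
    (α : Finset ι → ℝ) (β γ δ : ℝ) (x : Finset ι → ℝ) (A : Finset ι) : ℝ :=
  α A
    - x A * (β * (∑ B ∈ univ.filter (fun B => A ⊂ B), x B)
             + γ * (∑ B ∈ univ.filter (fun B => ¬ A ⊆ B ∧ ¬ B ⊆ A), x B))
    + β * ∑ B ∈ univ.filter (fun B => A ⊆ B),
        (∑ a ∈ A, x (A.erase a)) * x B / (1 + ((B \ A).card : ℝ))
    + γ * ∑ B ∈ univ.filter (fun B => ¬ A ⊆ B),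
        (∑ a ∈ A ∩ B, x (A.erase a)) * x B / (1 + ((B \ A).card : ℝ))
    - δ * x univ * (if A = univ then 1 else 0)

section Aux

variable {ι : Type*} [Fintype ι] [DecidableEq ι]

theorem contDiff_vfield {ι : Type*} [Fintype ι] [DecidableEq ι] (α : Finset ι → ℝ) (β γ δ : ℝ) :
    ContDiff ℝ 1 (vfield α β γ δ) := by
  unfold vfield
  apply contDiff_pi.2
  intro A
  have hc : ∀ B : Finset ι, ContDiff ℝ 1 (fun x : Finset ι → ℝ => x B) := fun B =>
    contDiff_apply ℝ ℝ B
  refine ContDiff.sub (ContDiff.add (ContDiff.add (ContDiff.sub contDiff_const ?_) ?_) ?_) ?_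
  · exact (hc A).mul ((contDiff_const.mul (ContDiff.sum fun B _ => hc B)).add
      (contDiff_const.mul (ContDiff.sum fun B _ => hc B)))
  · exact contDiff_const.mul (ContDiff.sum fun B _ =>
      ((ContDiff.sum fun a _ => hc _).mul (hc B)).div_const _)
  · exact contDiff_const.mul (ContDiff.sum fun B _ =>
      ((ContDiff.sum fun a _ => hc _).mul (hc B)).div_const _)
  · exact (contDiff_const.mul (hc univ)).mul contDiff_const

theorem pair_reindex (B : Finset ι) (f : Finset ι → ι → ℝ) :
    ∑ A : Finset ι, ∑ a ∈ A ∩ B, f (A.erase a) a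
      = ∑ C : Finset ι, ∑ a ∈ B \ C, f C a := by
  rw [Finset.sum_sigma' univ (fun A => A ∩ B) (fun A a => f (A.erase a) a),
      Finset.sum_sigma' univ (fun C => B \ C) (fun C a => f C a)]
  refine Finset.sum_nbij' (fun p => ⟨p.1.erase p.2, p.2⟩) (fun p => ⟨insert p.2 p.1, p.2⟩)
    ?_ ?_ ?_ ?_ ?_
  · rintro ⟨A, a⟩ hp
    simp only [mem_sigma, mem_univ, true_and, mem_inter, mem_sdiff] at hp ⊢
    exact ⟨hp.2, notMem_erase _ _⟩
  · rintro ⟨C, a⟩ hp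
    simp only [mem_sigma, mem_univ, true_and, mem_sdiff] at hp
    simp [hp.1]
  · rintro ⟨A, a⟩ hp
    simp only [mem_sigma, mem_univ, true_and, mem_inter] at hp
    simp [Finset.insert_erase hp.1]
  · rintro ⟨C, a⟩ hp
    simp only [mem_sigma, mem_univ, true_and, mem_sdiff] at hp
    simp [Finset.erase_insert hp.2]
  · rintro ⟨A, a⟩ _; rfl

theorem inflow (y : Finset ι → ℝ) (p : Finset ι → Finset ι → Prop) [∀ A B, Decidable (p A B)]
    (hp : ∀ C B a, a ∈ B → a ∉ C → (p (insert a C) B ↔ p C B)) :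
    ∑ A : Finset ι, ∑ B : Finset ι,
        (if p A B then (∑ a ∈ A ∩ B, y (A.erase a)) * y B / (1 + ((B \ A).card : ℝ)) else 0)
      = ∑ A : Finset ι, ∑ B : Finset ι, (if p A B ∧ ¬ B ⊆ A then y A * y B else 0) := by
  rw [Finset.sum_comm]
  conv_rhs => rw [Finset.sum_comm]
  refine Finset.sum_congr rfl fun B _ => ?_
  calc
    ∑ A : Finset ι,
        (if p A B then (∑ a ∈ A ∩ B, y (A.erase a)) * y B / (1 + ((B \ A).card : ℝ)) else 0)
      = ∑ A : Finset ι, ∑ a ∈ A ∩ B,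
          (fun C a => if p (insert a C) B then
              y C * y B / (1 + ((B \ insert a C).card : ℝ)) else 0) (A.erase a) a := by
        refine Finset.sum_congr rfl fun A _ => ?_
        by_cases h : p A B
        · rw [if_pos h, Finset.sum_mul, Finset.sum_div]
          refine Finset.sum_congr rfl fun a ha => ?_
          rw [mem_inter] at ha
          simp only [Finset.insert_erase ha.1, if_pos h]
        · rw [if_neg h]
          symm
          refine Finset.sum_eq_zero fun a ha => ?_
          rw [mem_inter] at ha
          simp only [Finset.insert_erase ha.1, if_neg h]
    _ = ∑ C : Finset ι, ∑ a ∈ B \ C,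
          (if p (insert a C) B then y C * y B / (1 + ((B \ insert a C).card : ℝ)) else 0) :=
        pair_reindex B (fun C a =>
          if p (insert a C) B then y C * y B / (1 + ((B \ insert a C).card : ℝ)) else 0)
    _ = ∑ C : Finset ι, (if p C B ∧ ¬ B ⊆ C then y C * y B else 0) := by
        refine Finset.sum_congr rfl fun C _ => ?_
        have key : ∀ a ∈ B \ C,
            (if p (insert a C) B then y C * y B / (1 + ((B \ insert a C).card : ℝ)) else 0)
              = (if p C B then y C * y B / (((B \ C).card : ℝ)) else 0) := by
          intro a ha
          rw [mem_sdiff] at ha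
          have h1 : B \ insert a C = (B \ C).erase a := by
            ext b; simp only [mem_sdiff, mem_erase, mem_insert]; tauto
          have ha' : a ∈ B \ C := mem_sdiff.2 ha
          have h2 : 1 ≤ (B \ C).card := Finset.card_pos.2 ⟨a, ha'⟩
          have h3 : (1 : ℝ) + (((B \ C).erase a).card : ℝ) = ((B \ C).card : ℝ) := by
            rw [Finset.card_erase_of_mem ha', Nat.cast_sub h2]
            push_cast; ring
          simp only [hp C B a ha.1 ha.2, h1, h3]
        rw [Finset.sum_congr rfl key, Finset.sum_const]
        by_cases hpc : p C B
        · by_cases hbc : B ⊆ C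
          · have h0 : B \ C = ∅ := sdiff_eq_empty_iff_subset.2 hbc
            simp [h0, hpc, hbc]
          · have hne : (B \ C).Nonempty := sdiff_nonempty.2 hbc
            have hcard : (((B \ C).card : ℝ)) ≠ 0 := by
              exact_mod_cast (Finset.card_pos.2 hne).ne'
            rw [if_pos hpc, if_pos ⟨hpc, hbc⟩, nsmul_eq_mul]
            field_simp
        · simp [hpc]

theorem sum_vfield (α : Finset ι → ℝ) (β γ δ : ℝ) (y : Finset ι → ℝ) :
    ∑ A : Finset ι, vfield α β γ δ y A = (∑ A : Finset ι, α A) - δ * y univ := by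
  have hins : ∀ (C B : Finset ι) (a : ι), a ∈ B → a ∉ C → (insert a C ⊆ B ↔ C ⊆ B) := by
    intro C B a haB _; simp [Finset.insert_subset_iff, haB]
  have hb : (∑ A : Finset ι, ∑ B : Finset ι, (if A ⊆ B then
        (∑ a ∈ A ∩ B, y (A.erase a)) * y B / (1 + ((B \ A).card : ℝ)) else 0))
      = ∑ A : Finset ι, ∑ B : Finset ι, (if A ⊆ B ∧ ¬ B ⊆ A then y A * y B else 0) :=
    inflow y (fun A B => A ⊆ B) hins
  have hg : (∑ A : Finset ι, ∑ B : Finset ι, (if ¬ A ⊆ B then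
        (∑ a ∈ A ∩ B, y (A.erase a)) * y B / (1 + ((B \ A).card : ℝ)) else 0))
      = ∑ A : Finset ι, ∑ B : Finset ι, (if ¬ A ⊆ B ∧ ¬ B ⊆ A then y A * y B else 0) :=
    inflow y (fun A B => ¬ A ⊆ B)
      (fun C B a haB haC => by rw [hins C B a haB haC])
  have key : ∀ A : Finset ι, vfield α β γ δ y A =
      α A
      - β * (∑ B : Finset ι, if A ⊆ B ∧ ¬ B ⊆ A then y A * y B else 0)
      - γ * (∑ B : Finset ι, if ¬ A ⊆ B ∧ ¬ B ⊆ A then y A * y B else 0)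
      + β * (∑ B : Finset ι, if A ⊆ B then
          (∑ a ∈ A ∩ B, y (A.erase a)) * y B / (1 + ((B \ A).card : ℝ)) else 0)
      + γ * (∑ B : Finset ι, if ¬ A ⊆ B then
          (∑ a ∈ A ∩ B, y (A.erase a)) * y B / (1 + ((B \ A).card : ℝ)) else 0)
      - (if A = univ then δ * y univ else 0) := by
    intro A
    have o : y A * (β * (∑ B ∈ univ.filter (fun B => A ⊂ B), y B)
          + γ * (∑ B ∈ univ.filter (fun B => ¬ A ⊆ B ∧ ¬ B ⊆ A), y B))
        = β * (∑ B : Finset ι, if A ⊆ B ∧ ¬ B ⊆ A then y A * y B else 0)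
          + γ * (∑ B : Finset ι, if ¬ A ⊆ B ∧ ¬ B ⊆ A then y A * y B else 0) := by
      rw [Finset.sum_filter, Finset.sum_filter, mul_add]
      congr 1
      · rw [mul_left_comm, Finset.mul_sum]
        congr 1
        refine Finset.sum_congr rfl fun B _ => ?_
        simp only [mul_ite, mul_zero]
        exact if_congr ssubset_iff_subset_not_subset rfl rfl
      · rw [mul_left_comm, Finset.mul_sum]
        congr 1
        refine Finset.sum_congr rfl fun B _ => ?_
        simp only [mul_ite, mul_zero]
    have ib : (∑ B ∈ univ.filter (fun B => A ⊆ B),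
          (∑ a ∈ A, y (A.erase a)) * y B / (1 + ((B \ A).card : ℝ)))
        = ∑ B : Finset ι, if A ⊆ B then
            (∑ a ∈ A ∩ B, y (A.erase a)) * y B / (1 + ((B \ A).card : ℝ)) else 0 := by
      rw [Finset.sum_filter]
      refine Finset.sum_congr rfl fun B _ => ?_
      by_cases h : A ⊆ B
      · rw [if_pos h, if_pos h, Finset.inter_eq_left.mpr h]
      · rw [if_neg h, if_neg h]
    have ig : (∑ B ∈ univ.filter (fun B => ¬ A ⊆ B),
          (∑ a ∈ A ∩ B, y (A.erase a)) * y B / (1 + ((B \ A).card : ℝ)))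
        = ∑ B : Finset ι, if ¬ A ⊆ B then
            (∑ a ∈ A ∩ B, y (A.erase a)) * y B / (1 + ((B \ A).card : ℝ)) else 0 :=
      Finset.sum_filter _ _
    have d : δ * y univ * (if A = univ then (1:ℝ) else 0)
        = (if A = univ then δ * y univ else 0) := by
      by_cases h : A = univ <;> simp [h]
    unfold vfield
    rw [o, ib, ig, d]
    ring
  rw [Finset.sum_congr rfl (fun A _ => key A)]
  rw [Finset.sum_sub_distrib, Finset.sum_add_distrib, Finset.sum_add_distrib,
      Finset.sum_sub_distrib, Finset.sum_sub_distrib]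
  rw [← Finset.mul_sum, ← Finset.mul_sum, ← Finset.mul_sum, ← Finset.mul_sum]
  rw [hb, hg]
  have hd : (∑ A : Finset ι, if A = univ then δ * y univ else 0) = δ * y univ := by
    rw [Finset.sum_ite_eq' univ univ (fun _ => δ * y univ)]
    simp
  rw [hd]
  ring

theorem vfield_nonneg (α : Finset ι → ℝ) (hα : ∀ A, 0 ≤ α A) (β γ δ : ℝ)
    (hβ : 0 ≤ β) (hγ : 0 ≤ γ) (hδ : 0 ≤ δ) (y : Finset ι → ℝ) (hy : ∀ B, 0 ≤ y B)
    (A : Finset ι) (hyA : y A = 0) : 0 ≤ vfield α β γ δ y A := by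
  unfold vfield
  rw [hyA, zero_mul, sub_zero]
  have h1 : 0 ≤ β * ∑ B ∈ univ.filter (fun B => A ⊆ B),
      (∑ a ∈ A, y (A.erase a)) * y B / (1 + ((B \ A).card : ℝ)) := by
    refine mul_nonneg hβ (Finset.sum_nonneg fun B _ => div_nonneg
      (mul_nonneg (Finset.sum_nonneg fun a _ => hy _) (hy B)) (by positivity))
  have h2 : 0 ≤ γ * ∑ B ∈ univ.filter (fun B => ¬ A ⊆ B),
      (∑ a ∈ A ∩ B, y (A.erase a)) * y B / (1 + ((B \ A).card : ℝ)) := by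
    refine mul_nonneg hγ (Finset.sum_nonneg fun B _ => div_nonneg
      (mul_nonneg (Finset.sum_nonneg fun a _ => hy _) (hy B)) (by positivity))
  have h3 : δ * y univ * (if A = univ then (1:ℝ) else 0) = 0 := by
    by_cases h : A = univ
    · rw [if_pos h, ← h, hyA]; ring
    · rw [if_neg h]; ring
  rw [h3]
  have := hα A
  linarith

/-- componentwise clamp to `[0, R]` -/
noncomputable def clampv (R : ℝ) (x : Finset ι → ℝ) : Finset ι → ℝ :=
  fun A => max 0 (min R (x A))

theorem clampv_lipschitz (R : ℝ) : LipschitzWith 1 (clampv (ι := ι) R) := by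
  refine LipschitzWith.of_dist_le_mul fun x y => ?_
  simp only [NNReal.coe_one, one_mul]
  rw [dist_pi_le_iff dist_nonneg]
  intro A
  calc dist (clampv R x A) (clampv R y A)
      ≤ dist (x A) (y A) := by
        rw [Real.dist_eq, Real.dist_eq]
        calc |max 0 (min R (x A)) - max 0 (min R (y A))|
            ≤ |min R (x A) - min R (y A)| := by
              rw [max_comm 0 (min R (x A)), max_comm 0 (min R (y A))]
              exact abs_max_sub_max_le_abs _ _ _
          _ ≤ max |R - R| |x A - y A| := abs_min_sub_min_le_max _ _ _ _
          _ ≤ |x A - y A| := by simp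
    _ ≤ dist x y := dist_le_pi_dist x y A

theorem clampv_nonneg (R : ℝ) (x : Finset ι → ℝ) (A : Finset ι) : 0 ≤ clampv R x A :=
  le_max_left _ _

theorem clampv_eq_zero (R : ℝ) (x : Finset ι → ℝ) (A : Finset ι) (h : x A ≤ 0) :
    clampv R x A = 0 := by
  simp only [clampv]
  exact max_eq_left ((min_le_right _ _).trans h)

theorem clampv_mem (R : ℝ) (hR : 0 ≤ R) (x : Finset ι → ℝ) :
    clampv R x ∈ Metric.closedBall (0 : Finset ι → ℝ) R := by
  rw [Metric.mem_closedBall, dist_zero_right]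
  rw [pi_norm_le_iff_of_nonneg hR]
  intro A
  rw [Real.norm_eq_abs, abs_le]
  constructor
  · linarith [clampv_nonneg R x A]
  · exact max_le hR (min_le_left _ _)

theorem clampv_eq_self (R : ℝ) (x : Finset ι → ℝ) (h : ∀ A, 0 ≤ x A ∧ x A ≤ R) :
    clampv R x = x := by
  funext A
  simp only [clampv]
  rw [min_eq_right (h A).2, max_eq_right (h A).1]

/-- a `C¹` map is Lipschitz on every closed ball -/
theorem exists_lipschitzOnWith_closedBall (f : (Finset ι → ℝ) → (Finset ι → ℝ))
    (hf : ContDiff ℝ 1 f) (R : ℝ) :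
    ∃ K : NNReal, LipschitzOnWith K f (Metric.closedBall 0 R) := by
  obtain ⟨C, hC⟩ := (isCompact_closedBall (0 : Finset ι → ℝ) R).exists_bound_of_continuousOn
    (hf.continuous_fderiv one_ne_zero).continuousOn
  refine ⟨C.toNNReal, Convex.lipschitzOnWith_of_nnnorm_fderiv_le
    (fun x _ => hf.differentiable one_ne_zero x) (fun x hx => ?_) (convex_closedBall 0 R)⟩
  rw [← norm_toNNReal]
  exact Real.toNNReal_mono (hC x hx)

/-- scalar nonnegativity invariance -/
theorem nonneg_of_hasDerivAt (b : ℝ) (f d : ℝ → ℝ)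
    (hf : ∀ t ∈ Set.Icc (0 : ℝ) b, HasDerivAt f (d t) t)
    (h0 : 0 ≤ f 0) (hd : ∀ t ∈ Set.Icc (0 : ℝ) b, f t ≤ 0 → 0 ≤ d t) :
    ∀ t ∈ Set.Icc (0 : ℝ) b, 0 ≤ f t := by
  intro t ht
  by_contra hneg
  push_neg at hneg
  set Z : Set ℝ := {u | u ∈ Set.Icc 0 t ∧ 0 ≤ f u} with hZ
  have hZsub : Z ⊆ Set.Icc 0 t := fun u hu => hu.1
  have hZne : Z.Nonempty := ⟨0, ⟨le_refl 0, ht.1⟩, h0⟩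
  have hZbdd : BddAbove Z := ⟨t, fun u hu => hu.1.2⟩
  set s := sSup Z with hs
  have hsIcc : s ∈ Set.Icc 0 t := by
    constructor
    · exact le_csSup hZbdd ⟨⟨le_refl 0, ht.1⟩, h0⟩
    · exact csSup_le hZne fun u hu => hu.1.2
  have hsIcc' : s ∈ Set.Icc (0 : ℝ) b := ⟨hsIcc.1, hsIcc.2.trans ht.2⟩
  have hcont : ∀ u ∈ Set.Icc (0 : ℝ) b, ContinuousAt f u := fun u hu =>
    (hf u hu).continuousAt
  have hfs : 0 ≤ f s := by
    have hcl : s ∈ closure Z := csSup_mem_closure hZne hZbdd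
    haveI : Filter.NeBot (nhdsWithin s Z) := mem_closure_iff_nhdsWithin_neBot.1 hcl
    have htends : Filter.Tendsto f (nhdsWithin s Z) (nhds (f s)) :=
      (hcont s hsIcc').tendsto.mono_left nhdsWithin_le_nhds
    refine ge_of_tendsto htends ?_
    exact Filter.eventually_iff_exists_mem.2 ⟨Z, self_mem_nhdsWithin, fun u hu => hu.2⟩
  have hmono : MonotoneOn f (Set.Icc s t) := by
    apply monotoneOn_of_deriv_nonneg (convex_Icc s t)
    · intro u hu
      exact (hcont u ⟨hsIcc.1.trans hu.1, hu.2.trans ht.2⟩).continuousWithinAt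
    · intro u hu
      rw [interior_Icc] at hu
      exact ((hf u ⟨hsIcc.1.trans hu.1.le, hu.2.le.trans ht.2⟩).differentiableAt).differentiableWithinAt
    · intro u hu
      rw [interior_Icc] at hu
      have huIcc : u ∈ Set.Icc (0 : ℝ) b := ⟨hsIcc.1.trans hu.1.le, hu.2.le.trans ht.2⟩
      rw [(hf u huIcc).deriv]
      refine hd u huIcc ?_
      by_contra hfu
      push_neg at hfu
      have : u ∈ Z := ⟨⟨hsIcc.1.trans hu.1.le, hu.2.le⟩, hfu.le⟩
      exact absurd (le_csSup hZbdd this) (not_le.2 hu.1)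
  have := hmono (Set.left_mem_Icc.2 hsIcc.2) (Set.right_mem_Icc.2 hsIcc.2) hsIcc.2
  linarith

/-- global solution for a Lipschitz and bounded field -/
theorem exists_global_sol (v : (Finset ι → ℝ) → (Finset ι → ℝ)) (K : NNReal)
    (hK : LipschitzWith K v) (C : ℝ) (hC : ∀ x, ‖v x‖ ≤ C) (x₀ : Finset ι → ℝ)
    (T : ℝ) (hT : 0 < T) :
    ∃ f : ℝ → (Finset ι → ℝ), f 0 = x₀ ∧
      ∀ t ∈ Set.Ioo (-T) T, HasDerivAt f (v (f t)) t := by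
  have hC0 : 0 ≤ C := (norm_nonneg _).trans (hC x₀)
  have hpl : IsPicardLindelof (fun _ x => v x) (⟨0, by constructor <;> linarith⟩ : Set.Icc (-T) T)
      x₀ (C * T + 1).toNNReal 0 C.toNNReal K :=
    { lipschitzOnWith := fun t _ => hK.lipschitzOnWith
      continuousOn := fun x _ => continuousOn_const
      norm_le := fun t _ x _ => (hC x).trans (Real.le_coe_toNNReal C)
      mul_max_le := by
        simp only [NNReal.coe_zero, sub_zero, zero_sub, neg_neg, max_self,
          Real.coe_toNNReal _ hC0]
        rw [Real.coe_toNNReal _ (by positivity)]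
        linarith }
  obtain ⟨f, hf0, hf⟩ := hpl.exists_eq_forall_mem_Icc_hasDerivWithinAt₀
  refine ⟨f, hf0, fun t ht => ?_⟩
  exact (hf t (Set.mem_Icc_of_Ioo ht)).hasDerivAt (Icc_mem_nhds ht.1 ht.2)

end Aux

/-- The fluid ODE `ẋ = v(x)` has a unique solution for all `t ≥ 0` starting from any
point `x₀` of the nonnegative orthant, and this solution stays in the nonnegative orthant. -/
theorem fluid_ode_global_wellposed_nonneg
    {ι : Type*} [Fintype ι] [Nonempty ι] [DecidableEq ι]
    (α : Finset ι → ℝ) (hα : ∀ A, 0 ≤ α A)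
    (β γ δ : ℝ) (hβ : 0 < β) (hγ : 0 ≤ γ) (hδ : 0 ≤ δ)
    (x₀ : Finset ι → ℝ) (hx₀ : ∀ A, 0 ≤ x₀ A) :
    ∃ x : ℝ → Finset ι → ℝ,
      (x 0 = x₀ ∧ ∀ t : ℝ, 0 ≤ t → HasDerivAt x (vfield α β γ δ (x t)) t) ∧
      (∀ y : ℝ → Finset ι → ℝ,
          (y 0 = x₀ ∧ ∀ t : ℝ, 0 ≤ t → HasDerivAt y (vfield α β γ δ (y t)) t) →
          ∀ t : ℝ, 0 ≤ t → y t = x t) ∧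
      (∀ t : ℝ, 0 ≤ t → ∀ A : Finset ι, 0 ≤ x t A) := by
  classical
  have smooth := contDiff_vfield α β γ δ
  set S := ∑ A : Finset ι, α A with hSdef
  have hS0 : 0 ≤ S := Finset.sum_nonneg fun A _ => hα A
  set M := ∑ A : Finset ι, x₀ A with hMdef
  have hM0 : 0 ≤ M := Finset.sum_nonneg fun A _ => hx₀ A
  set R : ℕ → ℝ := fun n => M + S * (n + 1) + 1 with hRdef
  have hR0 : ∀ n, 0 ≤ R n := fun n => by positivity
  -- solutions of the truncated systems
  have hsol : ∀ n : ℕ, ∃ f : ℝ → (Finset ι → ℝ), f 0 = x₀ ∧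
      ∀ t ∈ Set.Ioo (-((n : ℝ) + 1)) ((n : ℝ) + 1),
        HasDerivAt f (vfield α β γ δ (clampv (R n) (f t))) t := by
    intro n
    obtain ⟨K, hK⟩ := exists_lipschitzOnWith_closedBall (vfield α β γ δ) smooth (R n)
    have hlip : LipschitzWith K (fun z => vfield α β γ δ (clampv (R n) z)) := by
      refine LipschitzWith.of_dist_le_mul fun z w => ?_
      calc dist (vfield α β γ δ (clampv (R n) z)) (vfield α β γ δ (clampv (R n) w))
          ≤ K * dist (clampv (R n) z) (clampv (R n) w) :=
            (lipschitzOnWith_iff_dist_le_mul.1 hK) _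
              (clampv_mem (R n) (hR0 n) z) _ (clampv_mem (R n) (hR0 n) w)
        _ ≤ K * dist z w := by
            have h := (clampv_lipschitz (ι := ι) (R n)).dist_le_mul z w
            rw [NNReal.coe_one, one_mul] at h
            exact mul_le_mul_of_nonneg_left h K.coe_nonneg
    obtain ⟨C, hCb⟩ := (isCompact_closedBall (0 : Finset ι → ℝ) (R n)).exists_bound_of_continuousOn
      (smooth.continuous.continuousOn)
    exact exists_global_sol _ K hlip C
      (fun z => hCb _ (clampv_mem (R n) (hR0 n) z)) x₀ _ (by positivity)
  choose f hf0 hfIoo using hsol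
  have hIccIoo : ∀ n : ℕ, Set.Icc (0 : ℝ) n ⊆ Set.Ioo (-((n : ℝ) + 1)) ((n : ℝ) + 1) :=
    fun n t ht => ⟨by linarith [ht.1], by linarith [ht.2]⟩
  -- nonnegativity of truncated solutions
  have hpos : ∀ n : ℕ, ∀ t ∈ Set.Icc (0 : ℝ) (n : ℝ), ∀ A, 0 ≤ f n t A := by
    intro n t ht A
    refine nonneg_of_hasDerivAt (n : ℝ) (fun u => f n u A)
      (fun u => vfield α β γ δ (clampv (R n) (f n u)) A) ?_ ?_ ?_ t ht
    · intro u hu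
      exact hasDerivAt_pi.1 (hfIoo n u (hIccIoo n hu)) A
    · show 0 ≤ f n 0 A
      rw [hf0]; exact hx₀ A
    · intro u hu hle
      exact vfield_nonneg α hα β γ δ hβ.le hγ hδ _ (clampv_nonneg _ _) A
        (clampv_eq_zero _ _ A hle)
  -- mass bound
  have hmass : ∀ n : ℕ, ∀ t ∈ Set.Icc (0 : ℝ) (n : ℝ), ∑ A, f n t A ≤ M + S * t := by
    intro n t ht
    have hg : ∀ u ∈ Set.Icc (0 : ℝ) (n : ℝ),
        HasDerivAt (fun w => M + S * w - ∑ A, f n w A)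
          (δ * clampv (R n) (f n u) univ) u := by
      intro u hu
      have h1 : HasDerivAt (fun w : ℝ => M + S * w) S u := by
        simpa using ((hasDerivAt_id u).const_mul S).const_add M
      have h2 : HasDerivAt (fun w => ∑ A, f n w A)
          (∑ A, vfield α β γ δ (clampv (R n) (f n u)) A) u :=
        HasDerivAt.fun_sum fun A _ => hasDerivAt_pi.1 (hfIoo n u (hIccIoo n hu)) A
      have h3 := h1.sub h2
      rw [sum_vfield] at h3
      convert h3 using 1
      all_goals first | rfl | (rw [hSdef]; ring)
    have hmono : MonotoneOn (fun w => M + S * w - ∑ A, f n w A) (Set.Icc (0 : ℝ) (n : ℝ)) := by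
      apply monotoneOn_of_deriv_nonneg (convex_Icc _ _)
      · intro u hu; exact (hg u hu).continuousAt.continuousWithinAt
      · intro u hu; rw [interior_Icc] at hu
        exact (hg u (Set.mem_Icc_of_Ioo hu)).differentiableAt.differentiableWithinAt
      · intro u hu; rw [interior_Icc] at hu
        rw [(hg u (Set.mem_Icc_of_Ioo hu)).deriv]
        exact mul_nonneg hδ (clampv_nonneg _ _ _)
    have h0mem : (0 : ℝ) ∈ Set.Icc (0 : ℝ) (n : ℝ) := ⟨le_refl 0, ht.1.trans ht.2⟩
    have := hmono h0mem ht ht.1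
    have h00 : M + S * 0 - ∑ A, f n 0 A = 0 := by rw [hf0]; simp [hMdef]
    simp only at this h00
    linarith
  -- the truncation is inactive along the solution
  have hid : ∀ n : ℕ, ∀ t ∈ Set.Icc (0 : ℝ) (n : ℝ), clampv (R n) (f n t) = f n t := by
    intro n t ht
    refine clampv_eq_self _ _ fun A => ⟨hpos n t ht A, ?_⟩
    have h1 : f n t A ≤ ∑ B, f n t B :=
      Finset.single_le_sum (fun B _ => hpos n t ht B) (mem_univ A)
    have h2 := hmass n t ht
    have h3 : S * t ≤ S * n := mul_le_mul_of_nonneg_left ht.2 hS0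
    have h4 : S * (n : ℝ) ≤ S * ((n : ℝ) + 1) := by nlinarith
    rw [hRdef]
    simp only
    linarith
  have horig : ∀ n : ℕ, ∀ t ∈ Set.Icc (0 : ℝ) (n : ℝ),
      HasDerivAt (f n) (vfield α β γ δ (f n t)) t := by
    intro n t ht
    have := hfIoo n t (hIccIoo n ht)
    rwa [hid n t ht] at this
  -- uniqueness of solutions of the original equation
  have huniq : ∀ (u w : ℝ → Finset ι → ℝ) (b : ℝ), u 0 = w 0 →
      (∀ t ∈ Set.Icc (0 : ℝ) b, HasDerivAt u (vfield α β γ δ (u t)) t) →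
      (∀ t ∈ Set.Icc (0 : ℝ) b, HasDerivAt w (vfield α β γ δ (w t)) t) →
      ∀ t ∈ Set.Icc (0 : ℝ) b, u t = w t := by
    intro u w b h0 hu hw
    have hucont : ContinuousOn u (Set.Icc 0 b) :=
      fun t ht => (hu t ht).continuousAt.continuousWithinAt
    have hwcont : ContinuousOn w (Set.Icc 0 b) :=
      fun t ht => (hw t ht).continuousAt.continuousWithinAt
    obtain ⟨ru, hru⟩ := isCompact_Icc.exists_bound_of_continuousOn hucont
    obtain ⟨rw', hrw⟩ := isCompact_Icc.exists_bound_of_continuousOn hwcont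
    obtain ⟨K, hK⟩ := exists_lipschitzOnWith_closedBall (vfield α β γ δ) smooth (max ru rw')
    have := ODE_solution_unique_of_mem_Icc_right
      (v := fun _ z => vfield α β γ δ z) (s := fun _ => Metric.closedBall 0 (max ru rw'))
      (fun _ _ => hK) hucont
      (fun t ht' => (hu t (Set.mem_Icc_of_Ico ht')).hasDerivWithinAt)
      (fun t ht' => by
        rw [Metric.mem_closedBall, dist_zero_right]
        exact (hru t (Set.mem_Icc_of_Ico ht')).trans (le_max_left _ _))
      hwcont
      (fun t ht' => (hw t (Set.mem_Icc_of_Ico ht')).hasDerivWithinAt)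
      (fun t ht' => by
        rw [Metric.mem_closedBall, dist_zero_right]
        exact (hrw t (Set.mem_Icc_of_Ico ht')).trans (le_max_right _ _))
      h0
    exact fun t ht => this ht
  -- compatibility of the various truncated solutions
  have hagree : ∀ (m n : ℕ) (t : ℝ), t ∈ Set.Icc (0 : ℝ) (m : ℝ) →
      t ∈ Set.Icc (0 : ℝ) (n : ℝ) → f m t = f n t := by
    intro m n t htm htn
    have := huniq (f m) (f n) (min (m : ℝ) (n : ℝ)) (by rw [hf0, hf0])
      (fun s hs => horig m s ⟨hs.1, hs.2.trans (min_le_left _ _)⟩)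
      (fun s hs => horig n s ⟨hs.1, hs.2.trans (min_le_right _ _)⟩)
    exact this t ⟨htm.1, le_min htm.2 htn.2⟩
  -- the global solution
  set x : ℝ → Finset ι → ℝ := fun t => f (⌈t⌉₊ + 1) t with hxdef
  have hceil : ∀ t : ℝ, 0 ≤ t → t ∈ Set.Icc (0 : ℝ) ((⌈t⌉₊ + 1 : ℕ) : ℝ) := by
    intro t ht
    refine ⟨ht, ?_⟩
    push_cast
    linarith [Nat.le_ceil t]
  have hxf : ∀ n : ℕ, ∀ t ∈ Set.Icc (0 : ℝ) (n : ℝ), x t = f n t := by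
    intro n t ht
    exact hagree _ n t (hceil t ht.1) ht
  have hx0 : x 0 = x₀ := by
    show f (⌈(0 : ℝ)⌉₊ + 1) 0 = x₀
    rw [hf0]
  have hxd : ∀ t : ℝ, 0 ≤ t → HasDerivAt x (vfield α β γ δ (x t)) t := by
    intro t ht
    rcases eq_or_lt_of_le ht with h | h
    · -- t = 0
      subst h
      have hev : x =ᶠ[nhds (0 : ℝ)] f 1 := by
        filter_upwards [Iio_mem_nhds (show (0 : ℝ) < 1 by norm_num)] with s hs
        rcases le_or_gt s 0 with h0 | h0
        · show f (⌈s⌉₊ + 1) s = f 1 s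
          rw [Nat.ceil_eq_zero.2 h0]
        · have : s ∈ Set.Icc (0 : ℝ) ((1 : ℕ) : ℝ) := ⟨h0.le, by exact_mod_cast hs.le⟩
          exact hxf 1 s this
      have hd1 := horig 1 0 ⟨le_refl 0, by norm_num⟩
      have hx01 : x 0 = f 1 0 := hxf 1 0 ⟨le_refl 0, by norm_num⟩
      rw [hx01]
      exact hd1.congr_of_eventuallyEq hev
    · -- t > 0
      have htn : t ∈ Set.Icc (0 : ℝ) ((⌈t⌉₊ + 1 : ℕ) : ℝ) := hceil t ht
      have hev : x =ᶠ[nhds t] f (⌈t⌉₊ + 1) := by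
        have hmem : Set.Ioo (0 : ℝ) ((⌈t⌉₊ + 1 : ℕ) : ℝ) ∈ nhds t := by
          refine Ioo_mem_nhds h ?_
          push_cast
          linarith [Nat.le_ceil t]
        filter_upwards [hmem] with s hs
        exact hxf _ s ⟨hs.1.le, hs.2.le⟩
      have hd1 := horig (⌈t⌉₊ + 1) t htn
      rw [hxf _ t htn]
      exact hd1.congr_of_eventuallyEq hev
  refine ⟨x, ⟨hx0, hxd⟩, ?_, ?_⟩
  · rintro y ⟨hy0, hyd⟩ t ht
    exact huniq y x t (by rw [hy0, hx0]) (fun s hs => hyd s hs.1)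
      (fun s hs => hxd s hs.1) t ⟨ht, le_refl t⟩
  · intro t ht A
    rw [hxf (⌈t⌉₊ + 1) t (hceil t ht)]
    exact hpos _ t (hceil t ht) A
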